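/- arXiv:2307.10647 — 2 statements merged into one kernel-verified Lean document; each statement's English description precedes it below -/
import Mathlib

section
/- Let X be a real Banach space, x ∈ B_X and 0 < α ≤ 2. Then Δc(x) ≥ α if and only if x ∈ closure(convexHull(Δ_{2−α+ε}(x))) for every ε > 0. -/
open Set Metric Filter

variable {X : Type*} [NormedAddCommGroup X] [NormedSpace ℝ X]

/-- The slice `S(f, δ)` of the closed unit ball of `X`, determined by a norm-one functional
`f` and `δ > 0` (the norm and positivity conditions are imposed at use sites). -/
def unitBallSlice (f : X →L[ℝ] ℝ) (δ : ℝ) : Set X :=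
  {y | ‖y‖ ≤ 1 ∧ 1 - δ < f y}

/-- The Daugavet constant of a point: the infimum over all slices of the unit ball of the
supremum of distances from `x` to points of the slice. -/
noncomputable def Dc (x : X) : ℝ :=
  sInf {r | ∃ (f : X →L[ℝ] ℝ) (δ : ℝ), ‖f‖ = 1 ∧ 0 < δ ∧
    r = sSup ((fun y => ‖x - y‖) '' unitBallSlice f δ)}

/-- The Δ-constant of a point: the infimum over all slices of the unit ball containing `x`
of the supremum of distances from `x` to points of the slice. -/
noncomputable def DeltaC (x : X) : ℝ :=
  sInf {r | ∃ (f : X →L[ℝ] ℝ) (δ : ℝ), ‖f‖ = 1 ∧ 0 < δ ∧ x ∈ unitBallSlice f δ ∧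
    r = sSup ((fun y => ‖x - y‖) '' unitBallSlice f δ)}

/-- The set `Δ_ε(x)` of points of the unit ball at distance at least `2 - ε` from `x`. -/
def DeltaSet (x : X) (ε : ℝ) : Set X :=
  {y | ‖y‖ ≤ 1 ∧ 2 - ε ≤ ‖y - x‖}

lemma slice_image_bddAbove (x : X) (hx : ‖x‖ ≤ 1) (f : X →L[ℝ] ℝ) (δ : ℝ) :
    BddAbove ((fun y => ‖x - y‖) '' unitBallSlice f δ) := by
  refine ⟨2, ?_⟩
  rintro r ⟨y, ⟨hy1, _⟩, rfl⟩
  calc ‖x - y‖ ≤ ‖x‖ + ‖y‖ := norm_sub_le _ _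
    _ ≤ 2 := by linarith

lemma deltaC_le_slice (x : X) (hx : ‖x‖ ≤ 1) {f : X →L[ℝ] ℝ} {δ : ℝ}
    (hf : ‖f‖ = 1) (hδ : 0 < δ) (hxS : x ∈ unitBallSlice f δ) :
    DeltaC x ≤ sSup ((fun y => ‖x - y‖) '' unitBallSlice f δ) := by
  apply csInf_le
  · refine ⟨0, ?_⟩
    rintro r ⟨g, γ, hg, hγ, hxg, rfl⟩
    refine le_csSup_of_le (slice_image_bddAbove x hx g γ) ⟨x, hxg, rfl⟩ ?_
    exact norm_nonneg _
  · exact ⟨f, δ, hf, hδ, hxS, rfl⟩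

lemma exists_norm_one_nonneg [Nontrivial X] (x : X) :
    ∃ f : X →L[ℝ] ℝ, ‖f‖ = 1 ∧ 0 ≤ f x := by
  by_cases hx : x = 0
  · obtain ⟨z, hz⟩ := exists_ne (0 : X)
    obtain ⟨f, hf1, hf2⟩ := exists_dual_vector ℝ z (norm_ne_zero_iff.mpr hz)
    exact ⟨f, hf1, by simp [hx]⟩
  · obtain ⟨f, hf1, hf2⟩ := exists_dual_vector ℝ x (norm_ne_zero_iff.mpr hx)
    exact ⟨f, hf1, by rw [hf2]; exact_mod_cast norm_nonneg x⟩

/-- `Δc(x) ≥ α` iff `x` lies in the closed convex hull of `Δ_{2-α+ε}(x)` for every `ε > 0`. -/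
theorem deltaConstant_ge_iff [CompleteSpace X] (x : X) (hx : ‖x‖ ≤ 1)
    (α : ℝ) (hα₀ : 0 < α) (hα₂ : α ≤ 2) :
    α ≤ DeltaC x ↔
      ∀ ε > (0 : ℝ), x ∈ closure (convexHull ℝ (DeltaSet x (2 - α + ε))) := by
  rcases subsingleton_or_nontrivial X with hs | hs
  · constructor
    · intro h
      exfalso
      have hempty : {r : ℝ | ∃ (f : X →L[ℝ] ℝ) (δ : ℝ), ‖f‖ = 1 ∧ 0 < δ ∧
          x ∈ unitBallSlice f δ ∧
          r = sSup ((fun y => ‖x - y‖) '' unitBallSlice f δ)} = ∅ := by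
        ext r
        simp only [mem_setOf_eq, mem_empty_iff_false, iff_false, not_exists]
        rintro f δ ⟨hf, -⟩
        have hf0 : f = 0 := by
          ext y; rw [Subsingleton.elim y (0 : X)]; simp
        rw [hf0] at hf; simp at hf
      rw [DeltaC, hempty, Real.sInf_empty] at h
      linarith
    · intro h
      exfalso
      have h2 := h (α / 2) (by linarith)
      have hΔ : DeltaSet x (2 - α + α / 2) = ∅ := by
        ext y
        simp only [DeltaSet, mem_setOf_eq, mem_empty_iff_false, iff_false, not_and]
        intro _
        have hyx : y = x := Subsingleton.elim y x
        rw [hyx, sub_self, norm_zero]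
        intro hcon; linarith
      rw [hΔ, convexHull_empty, closure_empty] at h2
      exact h2
  · -- nontrivial case
    constructor
    · -- ⇒
      intro h ε hε
      by_contra hxc
      set Δ := DeltaSet x (2 - α + ε) with hΔdef
      have hsub : Δ ⊆ closure (convexHull ℝ Δ) :=
        (subset_convexHull ℝ Δ).trans subset_closure
      rcases eq_empty_or_nonempty Δ with hΔ | hΔ
      · obtain ⟨f, hf1, hf2⟩ := exists_norm_one_nonneg x
        have hxS : x ∈ unitBallSlice f 2 := ⟨hx, by linarith⟩
        have h1 := deltaC_le_slice x hx hf1 two_pos hxS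
        have h2 : sSup ((fun y => ‖x - y‖) '' unitBallSlice f 2) ≤ α - ε := by
          refine csSup_le ⟨‖x - x‖, ⟨x, hxS, rfl⟩⟩ ?_
          rintro r ⟨y, ⟨hy1, hy2⟩, rfl⟩
          by_contra hr
          push_neg at hr
          have hyΔ : y ∈ Δ := ⟨hy1, by rw [norm_sub_rev]; linarith⟩
          rw [hΔ] at hyΔ
          exact hyΔ
        linarith
      · have hconv : Convex ℝ (closure (convexHull ℝ Δ)) :=
          (convex_convexHull ℝ Δ).closure
        obtain ⟨f, u, hfu1, hfu2⟩ :=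
          geometric_hahn_banach_closed_point hconv isClosed_closure hxc
        obtain ⟨y0, hy0⟩ := hΔ
        have hfy0 := hfu1 y0 (hsub hy0)
        have hfne : f ≠ 0 := by
          intro h0
          rw [h0] at hfy0 hfu2
          simp at hfy0 hfu2
          linarith
        have hfn : (0 : ℝ) < ‖f‖ := norm_pos_iff.mpr hfne
        set g : X →L[ℝ] ℝ := ‖f‖⁻¹ • f with hg
        have hgn : ‖g‖ = 1 := norm_smul_inv_norm hfne
        have hgapp : ∀ y : X, g y = ‖f‖⁻¹ * f y := fun y => rfl
        set c := ‖f‖⁻¹ * u with hc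
        have hgc : ∀ y ∈ Δ, g y < c := by
          intro y hy
          rw [hgapp, hc]
          exact mul_lt_mul_of_pos_left (hfu1 y (hsub hy)) (inv_pos.mpr hfn)
        have hgx : c < g x := by
          rw [hgapp, hc]
          exact mul_lt_mul_of_pos_left hfu2 (inv_pos.mpr hfn)
        have hgx1 : g x ≤ 1 := by
          calc g x ≤ |g x| := le_abs_self _
            _ = ‖g x‖ := (Real.norm_eq_abs _).symm
            _ ≤ ‖g‖ * ‖x‖ := g.le_opNorm x
            _ ≤ 1 := by rw [hgn, one_mul]; exact hx
        set δ : ℝ := 1 - (g x + c) / 2 with hδdef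
        have hδ : 0 < δ := by rw [hδdef]; linarith
        have h1δ : (1 : ℝ) - δ = (g x + c) / 2 := by rw [hδdef]; ring
        have hxS : x ∈ unitBallSlice g δ := ⟨hx, by rw [h1δ]; linarith⟩
        have h1 := deltaC_le_slice x hx hgn hδ hxS
        have h2 : sSup ((fun y => ‖x - y‖) '' unitBallSlice g δ) ≤ α - ε := by
          refine csSup_le ⟨‖x - x‖, ⟨x, hxS, rfl⟩⟩ ?_
          rintro r ⟨y, ⟨hy1, hy2⟩, rfl⟩
          by_contra hr
          push_neg at hr
          have hyΔ : y ∈ Δ := ⟨hy1, by rw [norm_sub_rev]; linarith⟩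
          have := hgc y hyΔ
          rw [h1δ] at hy2
          linarith
        linarith
    · -- ⇐
      intro h
      apply le_csInf
      · obtain ⟨f, hf1, hf2⟩ := exists_norm_one_nonneg x
        exact ⟨_, f, 2, hf1, two_pos, ⟨hx, by linarith⟩, rfl⟩
      · rintro r ⟨f, δ, hf, hδ, hxS, rfl⟩
        have key2 : ∀ ε > (0 : ℝ), α - ε ≤
            sSup ((fun y => ‖x - y‖) '' unitBallSlice f δ) := by
          intro ε hε
          obtain ⟨hx1, hx2⟩ := hxS
          have hηpos : (0 : ℝ) < f x - (1 - δ) := by linarith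
          obtain ⟨z, hz1, hz2⟩ := Metric.mem_closure_iff.mp (h ε hε) _ hηpos
          have hfz : 1 - δ < f z := by
            have hsb : f x - f z ≤ ‖x - z‖ := by
              calc f x - f z = f (x - z) := by rw [map_sub]
                _ ≤ |f (x - z)| := le_abs_self _
                _ = ‖f (x - z)‖ := (Real.norm_eq_abs _).symm
                _ ≤ ‖f‖ * ‖x - z‖ := f.le_opNorm _
                _ = ‖x - z‖ := by rw [hf, one_mul]
            have hdist : ‖x - z‖ < f x - (1 - δ) := by
              rwa [← dist_eq_norm]
            linarith
          have hex : ∃ y ∈ DeltaSet x (2 - α + ε), 1 - δ < f y := by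
            by_contra hcon
            push_neg at hcon
            have hhalf : convexHull ℝ (DeltaSet x (2 - α + ε)) ⊆ {v | f v ≤ 1 - δ} :=
              convexHull_min hcon (convex_halfSpace_le ⟨f.map_add, f.map_smul⟩ _)
            have := hhalf hz1
            simp only [mem_setOf_eq] at this
            linarith
          obtain ⟨y, hyΔ, hfy⟩ := hex
          have hyS : y ∈ unitBallSlice f δ := ⟨hyΔ.1, hfy⟩
          have hαε : α - ε ≤ ‖x - y‖ := by
            have hd := hyΔ.2
            rw [norm_sub_rev] at hd
            linarith
          exact hαε.trans (le_csSup (slice_image_bddAbove x hx f δ) ⟨y, hyS, rfl⟩)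
        by_contra hcon
        push_neg at hcon
        have := key2 ((α - sSup ((fun y => ‖x - y‖) '' unitBallSlice f δ)) / 2)
          (by linarith)
        linarith
end

section
/- Let X be a nonzero real Banach space. Then X admits almost Daugavet points if and only if sup_{x ∈ S_X} Dc(x) = 2. -/
open Set Metric Filter

variable {X : Type*} [NormedAddCommGroup X] [NormedSpace ℝ X]

lemma exists_mem_ball_gt (f : X →L[ℝ] ℝ) (hf : ‖f‖ = 1) {c : ℝ} (hc : c < 1) :
    ∃ y : X, ‖y‖ ≤ 1 ∧ c < f y := by
  by_cases h0 : c < 0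
  · exact ⟨0, by simp, by simpa using h0⟩
  · obtain ⟨y, hy, hfy⟩ := f.exists_lt_apply_of_lt_opNorm (r := c) (by rw [hf]; exact hc)
    rcases le_or_gt 0 (f y) with h | h
    · exact ⟨y, hy.le, by rwa [Real.norm_eq_abs, abs_of_nonneg h] at hfy⟩
    · refine ⟨-y, by simpa using hy.le, ?_⟩
      rw [map_neg]
      rwa [Real.norm_eq_abs, abs_of_neg h] at hfy

lemma slice_nonempty (f : X →L[ℝ] ℝ) (hf : ‖f‖ = 1) {δ : ℝ} (hδ : 0 < δ) :
    (unitBallSlice f δ).Nonempty := by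
  obtain ⟨y, hy, hfy⟩ := exists_mem_ball_gt f hf (c := 1 - δ) (by linarith)
  exact ⟨y, hy, hfy⟩

lemma image_bddAbove (x : X) (f : X →L[ℝ] ℝ) (δ : ℝ) :
    BddAbove ((fun y => ‖x - y‖) '' unitBallSlice f δ) := by
  refine ⟨‖x‖ + 1, ?_⟩
  rintro r ⟨y, hy, rfl⟩
  calc ‖x - y‖ ≤ ‖x‖ + ‖y‖ := norm_sub_le _ _
  _ ≤ ‖x‖ + 1 := by linarith [hy.1]

lemma dcSet_bddBelow (x : X) :
    BddBelow {r | ∃ (f : X →L[ℝ] ℝ) (δ : ℝ), ‖f‖ = 1 ∧ 0 < δ ∧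
      r = sSup ((fun y => ‖x - y‖) '' unitBallSlice f δ)} := by
  refine ⟨0, ?_⟩
  rintro r ⟨f, δ, hf, hδ, rfl⟩
  obtain ⟨y, hy⟩ := slice_nonempty f hf hδ
  exact le_trans (norm_nonneg _) (le_csSup (image_bddAbove x f δ) ⟨y, hy, rfl⟩)

lemma dc_le_sSup (x : X) (f : X →L[ℝ] ℝ) (δ : ℝ) (hf : ‖f‖ = 1) (hδ : 0 < δ) :
    Dc x ≤ sSup ((fun y => ‖x - y‖) '' unitBallSlice f δ) :=
  csInf_le (dcSet_bddBelow x) ⟨f, δ, hf, hδ, rfl⟩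

lemma exists_norm_one_functional [Nontrivial X] : ∃ f : X →L[ℝ] ℝ, ‖f‖ = 1 := by
  obtain ⟨v, hv⟩ := exists_ne (0 : X)
  obtain ⟨g, hg, -⟩ := exists_dual_vector ℝ v (norm_ne_zero_iff.mpr hv)
  exact ⟨g, hg⟩

lemma dc_le_norm_add_one [Nontrivial X] (x : X) : Dc x ≤ ‖x‖ + 1 := by
  obtain ⟨f, hf⟩ := exists_norm_one_functional (X := X)
  refine le_trans (dc_le_sSup x f 1 hf one_pos) ?_
  refine csSup_le ((slice_nonempty f hf one_pos).image _) ?_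
  rintro r ⟨y, hy, rfl⟩
  calc ‖x - y‖ ≤ ‖x‖ + ‖y‖ := norm_sub_le _ _
  _ ≤ ‖x‖ + 1 := by linarith [hy.1]

lemma forward_aux [Nontrivial X] {e : ℝ} (he : 0 < e) (he2 : e ≤ 1/2) {x : X}
    (hx1 : ‖x‖ ≤ 1)
    (hsub : {y : X | ‖y‖ ≤ 1} ⊆ closure (convexHull ℝ (DeltaSet x e))) :
    ∃ p : X, ‖p‖ = 1 ∧ 2 - 2*e ≤ Dc p := by
  -- DeltaSet is nonempty, hence ‖x‖ ≥ 1 - e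
  have h0 : (0 : X) ∈ closure (convexHull ℝ (DeltaSet x e)) := hsub (by simp)
  have hΔne : (DeltaSet x e).Nonempty := by
    by_contra h
    rw [not_nonempty_iff_eq_empty.mp h] at h0
    simp at h0
  obtain ⟨w₀, hw₀⟩ := hΔne
  have hxlb : 1 - e ≤ ‖x‖ := by
    have h1 : ‖w₀ - x‖ ≤ ‖w₀‖ + ‖x‖ := norm_sub_le _ _
    have := hw₀.1
    have := hw₀.2
    linarith
  have hxpos : 0 < ‖x‖ := by linarith
  set p : X := ‖x‖⁻¹ • x with hp_def
  have hpnorm : ‖p‖ = 1 := by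
    rw [hp_def, norm_smul, Real.norm_eq_abs, abs_of_nonneg (inv_nonneg.mpr (norm_nonneg x)),
      inv_mul_cancel₀ (ne_of_gt hxpos)]
  have hpx : ‖p - x‖ = 1 - ‖x‖ := by
    have : p - x = (‖x‖⁻¹ - 1) • x := by
      rw [hp_def, sub_smul, one_smul]
    rw [this, norm_smul, Real.norm_eq_abs]
    have hinv : 1 ≤ ‖x‖⁻¹ := (one_le_inv₀ hxpos).mpr hx1
    rw [abs_of_nonneg (by linarith), sub_mul, inv_mul_cancel₀ (ne_of_gt hxpos), one_mul]
  refine ⟨p, hpnorm, ?_⟩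
  refine le_csInf ?_ ?_
  · obtain ⟨f, hf⟩ := exists_norm_one_functional (X := X)
    exact ⟨_, f, 1, hf, one_pos, rfl⟩
  rintro r ⟨f, δ, hf, hδ, rfl⟩
  -- find a point of the slice inside DeltaSet x e
  obtain ⟨y₀, hy₀1, hy₀2⟩ := exists_mem_ball_gt f hf (c := 1 - δ/2) (by linarith)
  have hy₀C : y₀ ∈ closure (convexHull ℝ (DeltaSet x e)) := hsub hy₀1
  obtain ⟨z, hz, hdz⟩ := Metric.mem_closure_iff.mp hy₀C (δ/2) (by linarith)
  have hfz : 1 - δ < f z := by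
    have h1 : |f y₀ - f z| ≤ ‖y₀ - z‖ := by
      calc |f y₀ - f z| = ‖f (y₀ - z)‖ := by rw [map_sub]; rfl
      _ ≤ ‖f‖ * ‖y₀ - z‖ := f.le_opNorm _
      _ = ‖y₀ - z‖ := by rw [hf, one_mul]
    rw [dist_eq_norm] at hdz
    have h2 : f y₀ - f z ≤ |f y₀ - f z| := le_abs_self _
    linarith
  have hw : ∃ w ∈ DeltaSet x e, 1 - δ < f w := by
    by_contra h
    push_neg at h
    have hsub2 : convexHull ℝ (DeltaSet x e) ⊆ {v : X | f v ≤ 1 - δ} :=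
      convexHull_min h (convex_halfSpace_le (f.toLinearMap.isLinear) _)
    exact absurd (hsub2 hz) (by simpa using hfz)
  obtain ⟨w, hwΔ, hfw⟩ := hw
  have hdist : 2 - 2*e ≤ ‖p - w‖ := by
    have h1 : ‖w - x‖ ≤ ‖w - p‖ + ‖p - x‖ := norm_sub_le_norm_sub_add_norm_sub _ _ _
    have h2 : ‖w - p‖ = ‖p - w‖ := norm_sub_rev _ _
    have := hwΔ.2
    rw [hpx] at h1
    linarith
  exact le_trans hdist (le_csSup (image_bddAbove p f δ) ⟨w, ⟨hwΔ.1, hfw⟩, rfl⟩)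

lemma backward_aux [Nontrivial X] {ε : ℝ} (hε : 0 < ε) {p : X} (hp : ‖p‖ ≤ 1)
    (hDc : 2 - ε < Dc p) :
    {y : X | ‖y‖ ≤ 1} ⊆ closure (convexHull ℝ (DeltaSet p ε)) := by
  intro y₀ hy₀
  by_contra hy
  rcases eq_empty_or_nonempty (DeltaSet p ε) with hΔ | hΔ
  · -- empty case: every point of every slice is close to p
    obtain ⟨f, hf⟩ := exists_norm_one_functional (X := X)
    have : Dc p ≤ 2 - ε := by
      refine le_trans (dc_le_sSup p f 1 hf one_pos) ?_
      refine csSup_le ((slice_nonempty f hf one_pos).image _) ?_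
      rintro r ⟨y, hy', rfl⟩
      have hnot : y ∉ DeltaSet p ε := by rw [hΔ]; exact notMem_empty y
      have h2 : ¬ (2 - ε ≤ ‖y - p‖) := fun h => hnot ⟨hy'.1, h⟩
      show ‖p - y‖ ≤ 2 - ε
      rw [norm_sub_rev]
      linarith
    linarith
  · set C := closure (convexHull ℝ (DeltaSet p ε)) with hC
    have hCconv : Convex ℝ C := (convex_convexHull ℝ _).closure
    have hCclosed : IsClosed C := isClosed_closure
    obtain ⟨f, u, hfu, hu⟩ := geometric_hahn_banach_closed_point hCconv hCclosed hy
    have hΔC : DeltaSet p ε ⊆ C := (subset_convexHull ℝ _).trans subset_closure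
    obtain ⟨w, hw⟩ := hΔ
    have hfne : f ≠ 0 := by
      intro h
      have h1 := hfu w (hΔC hw)
      rw [h] at h1 hu
      simp at h1 hu
      linarith
    have hfpos : 0 < ‖f‖ := norm_pos_iff.mpr hfne
    set g : X →L[ℝ] ℝ := ‖f‖⁻¹ • f with hg_def
    have hg : ‖g‖ = 1 := by
      have hns := norm_smul (α := ℝ) (‖f‖⁻¹) f
      rw [hg_def, hns, Real.norm_eq_abs, abs_of_nonneg (inv_nonneg.mpr (norm_nonneg f)),
        inv_mul_cancel₀ (ne_of_gt hfpos)]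
    have hgapp : ∀ v : X, g v = ‖f‖⁻¹ * f v := fun v => rfl
    set α : ℝ := ‖f‖⁻¹ * u with hα_def
    have hgy₀ : α < g y₀ := by
      rw [hgapp, hα_def]
      exact mul_lt_mul_of_pos_left hu (inv_pos.mpr hfpos)
    have hgy₀le : g y₀ ≤ 1 := by
      have h1 : g y₀ ≤ ‖g y₀‖ := le_abs_self _
      have h2 : ‖g y₀‖ ≤ ‖g‖ * ‖y₀‖ := g.le_opNorm _
      rw [hg, one_mul] at h2
      exact h1.trans (h2.trans hy₀)
    set δ : ℝ := 1 - α with hδ_def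
    have hδ : 0 < δ := by rw [hδ_def]; linarith
    have h1δ : 1 - δ = α := by rw [hδ_def]; ring
    have hDcle : Dc p ≤ 2 - ε := by
      refine le_trans (dc_le_sSup p g δ hg hδ) ?_
      refine csSup_le ⟨‖p - y₀‖, y₀, ⟨hy₀, by rw [h1δ]; exact hgy₀⟩, rfl⟩ ?_
      rintro r ⟨y, hy', rfl⟩
      have hfy : u < f y := by
        have h3 := hy'.2
        rw [h1δ, hgapp, hα_def] at h3
        exact lt_of_mul_lt_mul_left h3 (inv_nonneg.mpr (norm_nonneg f))
      have hyC : y ∉ C := fun hyC => absurd (hfu y hyC) (not_lt.mpr hfy.le)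
      have hnot : y ∉ DeltaSet p ε := fun h => hyC (hΔC h)
      have h2 : ¬ (2 - ε ≤ ‖y - p‖) := fun h => hnot ⟨hy'.1, h⟩
      show ‖p - y‖ ≤ 2 - ε
      rw [norm_sub_rev]
      linarith
    linarith

/-- A nonzero Banach space admits almost Daugavet points iff the supremum of the Daugavet
constants over the unit sphere is 2. -/
theorem almostDaugavetPoints_iff [CompleteSpace X] [Nontrivial X] :
    (∀ ε > (0 : ℝ), ∃ x : X, ‖x‖ ≤ 1 ∧
        {y : X | ‖y‖ ≤ 1} ⊆ closure (convexHull ℝ (DeltaSet x ε))) ↔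
      sSup (Dc '' {x : X | ‖x‖ = 1}) = 2 := by
  have hSne : ∃ p : X, ‖p‖ = 1 := by
    obtain ⟨v, hv⟩ := exists_ne (0 : X)
    have hvpos : 0 < ‖v‖ := norm_pos_iff.mpr hv
    refine ⟨‖v‖⁻¹ • v, ?_⟩
    rw [norm_smul, Real.norm_eq_abs, abs_of_nonneg (inv_nonneg.mpr (norm_nonneg v)),
      inv_mul_cancel₀ (ne_of_gt hvpos)]
  obtain ⟨p₀, hp₀⟩ := hSne
  have himne : (Dc '' {x : X | ‖x‖ = 1}).Nonempty := ⟨Dc p₀, p₀, hp₀, rfl⟩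
  have hbdd : BddAbove (Dc '' {x : X | ‖x‖ = 1}) := by
    refine ⟨2, ?_⟩
    rintro r ⟨q, hq, rfl⟩
    have := dc_le_norm_add_one q
    rw [hq] at this
    linarith
  constructor
  · intro h
    refine le_antisymm ?_ ?_
    · refine csSup_le himne ?_
      rintro r ⟨q, hq, rfl⟩
      have := dc_le_norm_add_one q
      rw [hq] at this
      linarith
    · by_contra hlt
      push_neg at hlt
      set s := sSup (Dc '' {x : X | ‖x‖ = 1}) with hs
      set η : ℝ := (2 - s) / 4 with hη
      have hηpos : 0 < η := by rw [hη]; linarith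
      set e : ℝ := min η (1/2) with he_def
      have he : 0 < e := lt_min hηpos (by norm_num)
      have he2 : e ≤ 1/2 := min_le_right _ _
      obtain ⟨x, hx1, hxsub⟩ := h e he
      obtain ⟨p, hp, hDcp⟩ := forward_aux he he2 hx1 hxsub
      have hmem : Dc p ≤ s := le_csSup hbdd ⟨p, hp, rfl⟩
      have heη : e ≤ η := min_le_left _ _
      rw [hη] at heη
      linarith
  · intro hsup ε hε
    have hlt : 2 - ε < sSup (Dc '' {x : X | ‖x‖ = 1}) := by rw [hsup]; linarith
    obtain ⟨r, ⟨p, hp, rfl⟩, hr⟩ := exists_lt_of_lt_csSup himne hlt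
    exact ⟨p, hp.le, backward_aux hε hp.le hr⟩
end
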